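/- Every finitely generated solvable group in which every element has finite order is finite. -/

import Mathlib

private lemma derivedSeries_commutator_map_le (G : Type*) [Group G] (n : ℕ) :
    (derivedSeries (commutator G) n).map (commutator G).subtype ≤ derivedSeries G (n + 1) := by
  induction n with
  | zero =>
      rw [derivedSeries_one]
      exact Subgroup.map_subtype_le _
  | succ n ih =>
      rw [derivedSeries_succ, Subgroup.map_commutator, derivedSeries_succ]
      exact Subgroup.commutator_mono ih ih

private lemma aux_fin : ∀ (n : ℕ) (G : Type*) [Group G], derivedSeries G n = ⊥ →
    Group.FG G → (∀ g : G, IsOfFinOrder g) → Finite G := by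
  intro n
  induction n with
  | zero =>
      intro G _ h _ _
      rw [derivedSeries_zero] at h
      have : Subsingleton G :=
        ⟨fun a b => by
          have ha : a ∈ (⊥ : Subgroup G) := h ▸ Subgroup.mem_top a
          have hb : b ∈ (⊥ : Subgroup G) := h ▸ Subgroup.mem_top b
          rw [Subgroup.mem_bot] at ha hb; rw [ha, hb]⟩
      exact Finite.of_subsingleton
  | succ n ih =>
      intro G _ h hfg htor
      haveI : Group.FG G := hfg
      set H : Subgroup G := commutator G with hH
      haveI : H.Normal := by rw [hH]; infer_instance
      have hsurj : Function.Surjective ((Abelianization.of : G →* Abelianization G)) :=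
        QuotientGroup.mk'_surjective (commutator G)
      haveI : Group.FG (Abelianization G) := Group.fg_of_surjective hsurj
      have habf : Finite (Abelianization G) :=
        CommGroup.finite_of_fg_torsion (Abelianization G) (fun g => by
          obtain ⟨x, rfl⟩ := hsurj g
          exact (Abelianization.of).isOfFinOrder (htor x))
      have hab : Finite (G ⧸ H) := habf
      haveI : H.FiniteIndex := H.finiteIndex_of_finite_quotient
      haveI : Group.FG H := Subgroup.fg_of_index_ne_zero H
      have hHser : derivedSeries H n = ⊥ := by
        rw [← Subgroup.map_eq_bot_iff_of_injective _ H.subtype_injective]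
        exact le_bot_iff.mp (h ▸ derivedSeries_commutator_map_le G n)
      have hHfin : Finite H := ih H hHser ‹Group.FG H›
        (fun g => Submonoid.isOfFinOrder_coe.mp (htor (g : G)))
      exact Finite.of_equiv _ (Subgroup.groupEquivQuotientProdSubgroup (s := H)).symm

/-- Every finitely generated solvable torsion group is finite. -/
theorem fg_solvable_torsion_finite (G : Type*) [Group G] [Group.IsSolvable G]
    (hfg : Group.FG G) (htor : ∀ g : G, IsOfFinOrder g) : Finite G := by
  obtain ⟨n, hn⟩ := Group.IsSolvable.solvable (G := G)
  exact aux_fin n G hn hfg htor
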